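/- Θ = Alt(Or₁ ∪ Or₂) is a cocycle: for every 6-tuple (z₀,…,z₅) in (S¹×S¹)⁶, Σ_{i=0}^{5} (−1)ⁱ Θ(z₀,…,ẑᵢ,…,z₅) = 0, where ẑᵢ means that the i-th coordinate is omitted. -/

import Mathlib

open scoped BigOperators

/-- Orientation cocycle on the circle: +1 for positively oriented (counterclockwise)
triples of distinct points, -1 for negatively oriented triples, 0 if two coincide. -/
noncomputable def orient (a b c : Circle) : ℝ :=
  Real.sign (((starRingEnd ℂ) ((b : ℂ) - (a : ℂ)) * ((c : ℂ) - (a : ℂ))).im)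

/-- `x 0, …, x (n-1)` are positively cyclically ordered according to their numbering. -/
def PosCyclicallyOrdered {n : ℕ} (x : Fin n → Circle) : Prop :=
  ∀ i j k : Fin n, i < j → j < k → orient (x i) (x j) (x k) = 1

/-- Θ = Alt(Or₁ ∪ Or₂). -/
noncomputable def Theta (z : Fin 5 → Circle × Circle) : ℝ :=
  (1 / 120) * ∑ σ : Equiv.Perm (Fin 5),
    ((Equiv.Perm.sign σ : ℤ) : ℝ) *
      (orient (z (σ 0)).1 (z (σ 1)).1 (z (σ 2)).1 *
        orient (z (σ 2)).2 (z (σ 3)).2 (z (σ 4)).2)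

open Real Equiv Equiv.Perm

/-! ### Sign arithmetic helpers -/

private lemma rsign_mul (x y : ℝ) : Real.sign (x * y) = Real.sign x * Real.sign y := by
  unfold Real.sign
  split_ifs <;> (try norm_num) <;> nlinarith

private lemma sign_prod_eq (x y : ℝ) :
    Real.sign x * Real.sign y * Real.sign (x + y) =
      Real.sign x + Real.sign y - Real.sign (x + y) := by
  unfold Real.sign
  split_ifs <;> (try norm_num) <;> linarith

private lemma sign_sin_half {t : ℝ} (h1 : -(2 * π) < t) (h2 : t < 2 * π) :
    Real.sign (Real.sin (t / 2)) = Real.sign t := by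
  have hpi := Real.pi_pos
  rcases lt_trichotomy t 0 with h | h | h
  · rw [Real.sign_of_neg h, Real.sign_of_neg]
    have : Real.sin (-(t/2)) > 0 := Real.sin_pos_of_pos_of_lt_pi (by linarith) (by linarith)
    rw [Real.sin_neg] at this; linarith
  · simp [h]
  · rw [Real.sign_of_pos h, Real.sign_of_pos]
    exact Real.sin_pos_of_pos_of_lt_pi (by linarith) (by linarith)

private lemma sin_ident (u v : ℝ) :
    Real.sin (2*u) + Real.sin (2*v) - Real.sin (2*u + 2*v) =
      4 * Real.sin u * Real.sin v * Real.sin (u + v) := by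
  rw [Real.sin_two_mul, Real.sin_two_mul, show 2*u + 2*v = 2*(u+v) by ring,
    Real.sin_two_mul, Real.sin_add, Real.cos_add]
  linear_combination (-2*Real.sin u*Real.cos u) * Real.sin_sq_add_cos_sq v + (-2*Real.sin v*Real.cos v) * Real.sin_sq_add_cos_sq u

/-! ### The orientation cocycle is the coboundary of the "sign of argument difference" -/

private noncomputable def gsgn (a b : Circle) : ℝ := Real.sign ((b : ℂ).arg - (a : ℂ).arg)

private lemma circle_eq_exp (a : Circle) : (a : ℂ) = Complex.exp ((a : ℂ).arg * Complex.I) := by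
  conv_lhs => rw [← Complex.norm_mul_exp_arg_mul_I (a : ℂ)]
  rw [Circle.norm_coe, Complex.ofReal_one, one_mul]

private lemma im_conj_mul (a b : Circle) :
    ((starRingEnd ℂ) (a : ℂ) * (b : ℂ)).im = Real.sin ((b : ℂ).arg - (a : ℂ).arg) := by
  conv_lhs => rw [circle_eq_exp a, circle_eq_exp b]
  rw [← Complex.exp_conj, map_mul, Complex.conj_I, Complex.conj_ofReal, ← Complex.exp_add,
    show (((a:ℂ).arg : ℂ) * -Complex.I + ((b:ℂ).arg : ℂ) * Complex.I)
        = (((b:ℂ).arg - (a:ℂ).arg : ℝ) : ℂ) * Complex.I by push_cast; ring]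
  exact Complex.exp_ofReal_mul_I_im _

private lemma orient_eq (a b c : Circle) : orient a b c = gsgn a b + gsgn b c - gsgn a c := by
  have hpi := Real.pi_pos
  set α := (a : ℂ).arg with hα
  set β := (b : ℂ).arg with hβ
  set γ := (c : ℂ).arg with hγ
  have ba := Complex.neg_pi_lt_arg (a : ℂ); have ba' := Complex.arg_le_pi (a : ℂ)
  have bb := Complex.neg_pi_lt_arg (b : ℂ); have bb' := Complex.arg_le_pi (b : ℂ)
  have bc := Complex.neg_pi_lt_arg (c : ℂ); have bc' := Complex.arg_le_pi (c : ℂ)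
  have him : ((starRingEnd ℂ) ((b : ℂ) - (a : ℂ)) * ((c : ℂ) - (a : ℂ))).im
      = Real.sin (β - α) + Real.sin (γ - β) - Real.sin (γ - α) := by
    have e : (starRingEnd ℂ) ((b : ℂ) - (a : ℂ)) * ((c : ℂ) - (a : ℂ))
        = (starRingEnd ℂ) (b:ℂ) * (c:ℂ) - (starRingEnd ℂ) (b:ℂ) * (a:ℂ)
          - (starRingEnd ℂ) (a:ℂ) * (c:ℂ) + (starRingEnd ℂ) (a:ℂ) * (a:ℂ) := by
      rw [map_sub]; ring
    rw [e]
    simp only [Complex.add_im, Complex.sub_im, im_conj_mul]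
    rw [show α - α = 0 by ring, Real.sin_zero, show α - β = -(β - α) by ring, Real.sin_neg]
    ring
  unfold orient gsgn
  rw [him, ← hα, ← hβ, ← hγ]
  have key : Real.sin (β - α) + Real.sin (γ - β) - Real.sin (γ - α)
      = 4 * Real.sin ((β-α)/2) * Real.sin ((γ-β)/2) * Real.sin ((β-α)/2 + (γ-β)/2) := by
    have h := sin_ident ((β-α)/2) ((γ-β)/2)
    rw [show 2*((β-α)/2) = β - α by ring, show 2*((γ-β)/2) = γ - β by ring,
      show β - α + (γ - β) = γ - α by ring] at h
    linarith
  rw [key, rsign_mul, rsign_mul, rsign_mul,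
    Real.sign_of_pos (by norm_num : (0:ℝ) < 4), one_mul,
    show (β-α)/2 + (γ-β)/2 = ((β-α)+(γ-β))/2 by ring,
    sign_sin_half (by linarith) (by linarith),
    sign_sin_half (by linarith) (by linarith),
    sign_sin_half (by linarith) (by linarith),
    sign_prod_eq (β-α) (γ-β), show (β-α) + (γ-β) = γ - α by ring]

/-! ### Permutation combinatorics -/

private noncomputable def ext5 (σ : Equiv.Perm (Fin 5)) : Equiv.Perm (Fin 6) :=
  Equiv.Perm.decomposeFin.symm (0, σ)

private lemma ext5_zero (σ : Perm (Fin 5)) : ext5 σ 0 = 0 :=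
  Equiv.Perm.decomposeFin_symm_apply_zero 0 σ

private lemma ext5_succ (σ : Perm (Fin 5)) (j : Fin 5) : ext5 σ j.succ = (σ j).succ := by
  rw [ext5, Equiv.Perm.decomposeFin_symm_apply_succ, Equiv.swap_self, Equiv.refl_apply]

private lemma sign_ext5 (σ : Perm (Fin 5)) : Equiv.Perm.sign (ext5 σ) = Equiv.Perm.sign σ := by
  rw [ext5, Equiv.Perm.decomposeFin.symm_sign, if_pos rfl, one_mul]

private noncomputable def Psi (i : Fin 6) : Fin 6 × Equiv.Perm (Fin 5) ≃ Equiv.Perm (Fin 6) where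
  toFun x := (Fin.cycleRange x.1)⁻¹ * ext5 x.2 * Fin.cycleRange i
  invFun τ := (τ i, (Equiv.Perm.decomposeFin (Fin.cycleRange (τ i) * τ * (Fin.cycleRange i)⁻¹)).2)
  left_inv := by
    rintro ⟨p, σ⟩
    have happ : ((Fin.cycleRange p)⁻¹ * ext5 σ * Fin.cycleRange i) i = p := by
      rw [Equiv.Perm.mul_apply, Equiv.Perm.mul_apply, Fin.cycleRange_self, ext5_zero,
        Equiv.Perm.inv_def, Fin.cycleRange_symm_zero]
    have hgrp : Fin.cycleRange p * ((Fin.cycleRange p)⁻¹ * ext5 σ * Fin.cycleRange i)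
        * (Fin.cycleRange i)⁻¹ = ext5 σ := by group
    simp only [happ, hgrp, Prod.mk.injEq]
    refine ⟨trivial, ?_⟩
    rw [ext5, Equiv.apply_symm_apply]
  right_inv := by
    intro τ
    set υ := Fin.cycleRange (τ i) * τ * (Fin.cycleRange i)⁻¹ with hυ
    have h0 : υ 0 = 0 := by
      rw [hυ, Equiv.Perm.mul_apply, Equiv.Perm.mul_apply, Equiv.Perm.inv_def,
        Fin.cycleRange_symm_zero, Fin.cycleRange_self]
    have hext : ext5 (Equiv.Perm.decomposeFin υ).2 = υ := by
      rw [ext5, show (0 : Fin 6) = (Equiv.Perm.decomposeFin υ).1 by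
        rw [← h0]
        conv_lhs => rw [← Equiv.symm_apply_apply Equiv.Perm.decomposeFin υ]
        rw [show Equiv.Perm.decomposeFin.symm (Equiv.Perm.decomposeFin υ)
            = Equiv.Perm.decomposeFin.symm ((Equiv.Perm.decomposeFin υ).1,
              (Equiv.Perm.decomposeFin υ).2) by rfl,
          Equiv.Perm.decomposeFin_symm_apply_zero]]
      exact Equiv.symm_apply_apply _ _
    show (Fin.cycleRange (τ i))⁻¹ * ext5 (Equiv.Perm.decomposeFin υ).2 * Fin.cycleRange i = τ
    rw [hext, hυ]
    group

private lemma Psi_sign (i p : Fin 6) (σ : Perm (Fin 5)) :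
    Equiv.Perm.sign (Psi i (p, σ)) = (-1) ^ (p : ℕ) * (-1) ^ (i : ℕ) * Equiv.Perm.sign σ := by
  simp only [Psi, Equiv.coe_fn_mk, map_mul, Equiv.Perm.sign_inv, Fin.sign_cycleRange, sign_ext5]
  exact mul_right_comm _ _ _

private lemma Psi_comp (i p : Fin 6) (σ : Perm (Fin 5)) (j : Fin 5) :
    (Psi i (p, σ)) (i.succAbove j) = p.succAbove (σ j) := by
  simp only [Psi, Equiv.coe_fn_mk, Equiv.Perm.mul_apply, Fin.cycleRange_succAbove,
    ext5_succ, Equiv.Perm.inv_def, Fin.cycleRange_symm_succ]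

/-! ### The cup product and its coboundary -/

private noncomputable def Tm (w : Fin 6 → Circle × Circle) (f : Fin 5 → Fin 6) : ℝ :=
  orient (w (f 0)).1 (w (f 1)).1 (w (f 2)).1 * orient (w (f 2)).2 (w (f 3)).2 (w (f 4)).2

private lemma cup_cocycle (w : Fin 6 → Circle × Circle) (τ : Perm (Fin 6)) :
    ∑ i : Fin 6, (-1:ℝ)^(i:ℕ) * Tm w (τ ∘ Fin.succAbove i) = 0 := by
  rw [Fin.sum_univ_six]
  simp only [Tm, Function.comp_apply,
    show (0:Fin 6).succAbove 0 = 1 from rfl,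
    show (0:Fin 6).succAbove 1 = 2 from rfl,
    show (0:Fin 6).succAbove 2 = 3 from rfl,
    show (0:Fin 6).succAbove 3 = 4 from rfl,
    show (0:Fin 6).succAbove 4 = 5 from rfl,
    show (1:Fin 6).succAbove 0 = 0 from rfl,
    show (1:Fin 6).succAbove 1 = 2 from rfl,
    show (1:Fin 6).succAbove 2 = 3 from rfl,
    show (1:Fin 6).succAbove 3 = 4 from rfl,
    show (1:Fin 6).succAbove 4 = 5 from rfl,
    show (2:Fin 6).succAbove 0 = 0 from rfl,
    show (2:Fin 6).succAbove 1 = 1 from rfl,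
    show (2:Fin 6).succAbove 2 = 3 from rfl,
    show (2:Fin 6).succAbove 3 = 4 from rfl,
    show (2:Fin 6).succAbove 4 = 5 from rfl,
    show (3:Fin 6).succAbove 0 = 0 from rfl,
    show (3:Fin 6).succAbove 1 = 1 from rfl,
    show (3:Fin 6).succAbove 2 = 2 from rfl,
    show (3:Fin 6).succAbove 3 = 4 from rfl,
    show (3:Fin 6).succAbove 4 = 5 from rfl,
    show (4:Fin 6).succAbove 0 = 0 from rfl,
    show (4:Fin 6).succAbove 1 = 1 from rfl,
    show (4:Fin 6).succAbove 2 = 2 from rfl,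
    show (4:Fin 6).succAbove 3 = 3 from rfl,
    show (4:Fin 6).succAbove 4 = 5 from rfl,
    show (5:Fin 6).succAbove 0 = 0 from rfl,
    show (5:Fin 6).succAbove 1 = 1 from rfl,
    show (5:Fin 6).succAbove 2 = 2 from rfl,
    show (5:Fin 6).succAbove 3 = 3 from rfl,
    show (5:Fin 6).succAbove 4 = 4 from rfl,
    show ((0:Fin 6):ℕ) = 0 from rfl,
    show ((1:Fin 6):ℕ) = 1 from rfl,
    show ((2:Fin 6):ℕ) = 2 from rfl,
    show ((3:Fin 6):ℕ) = 3 from rfl,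
    show ((4:Fin 6):ℕ) = 4 from rfl,
    show ((5:Fin 6):ℕ) = 5 from rfl]
  simp only [orient_eq]
  ring

/-- `Θ` is a simplicial cocycle: its coboundary vanishes on every 6-tuple. -/
theorem theta_is_cocycle (w : Fin 6 → Circle × Circle) :
    ∑ i : Fin 6, (-1 : ℝ) ^ (i : ℕ) * Theta (fun j => w (i.succAbove j)) = 0 := by
  classical
  set S : ℝ := ∑ p : Fin 6, (-1:ℝ)^(p:ℕ) *
      ∑ σ : Perm (Fin 5), ((Equiv.Perm.sign σ : ℤ) : ℝ) * Tm w (Fin.succAbove p ∘ σ) with hS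
  have fact2 : ∀ i : Fin 6, ∑ τ : Perm (Fin 6), ((Equiv.Perm.sign τ : ℤ) : ℝ)
      * Tm w (τ ∘ Fin.succAbove i) = (-1:ℝ)^(i:ℕ) * S := by
    intro i
    rw [← Equiv.sum_comp (Psi i)
      (fun τ => ((Equiv.Perm.sign τ : ℤ) : ℝ) * Tm w (τ ∘ Fin.succAbove i)),
      Fintype.sum_prod_type, hS, Finset.mul_sum]
    refine Finset.sum_congr rfl fun p _ => ?_
    rw [Finset.mul_sum, Finset.mul_sum]
    refine Finset.sum_congr rfl fun σ _ => ?_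
    have hc : (Psi i (p, σ)) ∘ Fin.succAbove i = Fin.succAbove p ∘ σ :=
      funext (Psi_comp i p σ)
    simp only [hc, Psi_sign i p σ, Units.val_mul, Units.val_pow_eq_pow_val, Units.val_neg,
      Units.val_one, Int.cast_mul, Int.cast_pow, Int.cast_neg, Int.cast_one]
    ring
  have h6 : (6:ℝ) * S = 0 := by
    have e0 : ∑ τ : Perm (Fin 6), ((Equiv.Perm.sign τ : ℤ) : ℝ) *
        ∑ i : Fin 6, (-1:ℝ)^(i:ℕ) * Tm w (τ ∘ Fin.succAbove i) = 0 := by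
      simp [cup_cocycle w]
    have swap : ∑ τ : Perm (Fin 6), ((Equiv.Perm.sign τ : ℤ) : ℝ) *
        ∑ i : Fin 6, (-1:ℝ)^(i:ℕ) * Tm w (τ ∘ Fin.succAbove i)
        = ∑ i : Fin 6, (-1:ℝ)^(i:ℕ) *
          ∑ τ : Perm (Fin 6), ((Equiv.Perm.sign τ : ℤ) : ℝ) * Tm w (τ ∘ Fin.succAbove i) := by
      simp_rw [Finset.mul_sum]
      rw [Finset.sum_comm]
      exact Finset.sum_congr rfl fun i _ => Finset.sum_congr rfl fun τ _ => by ring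
    rw [swap] at e0
    have e1 : ∑ i : Fin 6, (-1:ℝ)^(i:ℕ) *
        ∑ τ : Perm (Fin 6), ((Equiv.Perm.sign τ : ℤ) : ℝ) * Tm w (τ ∘ Fin.succAbove i)
        = ∑ _i : Fin 6, S := by
      refine Finset.sum_congr rfl fun i _ => ?_
      rw [fact2 i, ← mul_assoc, ← mul_pow]
      norm_num
    rw [e1] at e0
    simpa [Finset.sum_const, Finset.card_univ] using e0.symm
  have hS0 : S = 0 := by linarith
  have theta_eq : ∀ i : Fin 6, Theta (fun j => w (i.succAbove j))
      = (1/120 : ℝ) * ∑ σ : Perm (Fin 5), ((Equiv.Perm.sign σ : ℤ) : ℝ)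
        * Tm w (Fin.succAbove i ∘ σ) := fun i => rfl
  calc ∑ i : Fin 6, (-1 : ℝ) ^ (i : ℕ) * Theta (fun j => w (i.succAbove j))
      = (1/120 : ℝ) * S := by
        rw [hS, Finset.mul_sum]
        exact Finset.sum_congr rfl fun i _ => by rw [theta_eq i]; ring
    _ = 0 := by rw [hS0, mul_zero]
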